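/- The Pisano period of K is at most 6K for every K ≥ 1. -/

import Mathlib

open Nat Polynomial

-- basic Per definition and easy lemmas
def Per (K B : ℕ) : Prop := Nat.fib B ≡ 0 [MOD K] ∧ Nat.fib (B+1) ≡ 1 [MOD K]

lemma per_one (B : ℕ) : Per 1 B := ⟨Nat.modEq_one, Nat.modEq_one⟩

lemma per_shift {K B : ℕ} (h : Per K B) : ∀ n, Nat.fib (n + B) ≡ Nat.fib n [MOD K] := by
  intro n
  cases n with
  | zero => simpa using h.1
  | succ k =>
    have := Nat.fib_add k B
    calc Nat.fib (k + 1 + B) = Nat.fib (k + B + 1) := by ring_nf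
    _ = Nat.fib k * Nat.fib B + Nat.fib (k+1) * Nat.fib (B+1) := Nat.fib_add k B
    _ ≡ Nat.fib k * 0 + Nat.fib (k+1) * 1 [MOD K] := ((h.1.mul_left _).add (h.2.mul_left _))
    _ = Nat.fib (k+1) := by ring

lemma per_mul {K B : ℕ} (h : Per K B) (t : ℕ) : Per K (t * B) := by
  induction t with
  | zero => exact ⟨by simp [Nat.ModEq.refl], by simp [Nat.fib_one, Nat.ModEq.refl]⟩
  | succ s ih =>
    constructor
    · calc Nat.fib ((s+1) * B) = Nat.fib (s * B + B) := by ring_nf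
      _ ≡ Nat.fib (s * B) [MOD K] := per_shift h _
      _ ≡ 0 [MOD K] := ih.1
    · calc Nat.fib ((s+1) * B + 1) = Nat.fib (s * B + 1 + B) := by ring_nf
      _ ≡ Nat.fib (s * B + 1) [MOD K] := per_shift h _
      _ ≡ 1 [MOD K] := ih.2

lemma per_dvd {K B C : ℕ} (h : Per K B) (hd : B ∣ C) : Per K C := by
  obtain ⟨t, rfl⟩ := hd
  simpa [Nat.mul_comm] using per_mul h t

lemma per_coprime_mul {a b B : ℕ} (hab : Nat.Coprime a b) (ha : Per a B) (hb : Per b B) :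
    Per (a * b) B := by
  constructor
  · have h1 : a ∣ Nat.fib B := (Nat.modEq_zero_iff_dvd).1 ha.1
    have h2 : b ∣ Nat.fib B := (Nat.modEq_zero_iff_dvd).1 hb.1
    exact (Nat.modEq_zero_iff_dvd).2 (hab.mul_dvd_of_dvd_of_dvd h1 h2)
  · have hf : 1 ≤ Nat.fib (B+1) := Nat.fib_pos.2 (Nat.succ_pos B)
    have h1 : a ∣ Nat.fib (B+1) - 1 := (Nat.modEq_iff_dvd' hf).1 ha.2.symm
    have h2 : b ∣ Nat.fib (B+1) - 1 := (Nat.modEq_iff_dvd' hf).1 hb.2.symm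
    exact ((Nat.modEq_iff_dvd' hf).2 (hab.mul_dvd_of_dvd_of_dvd h1 h2)).symm



def fibM (R : Type*) [CommRing R] : Matrix (Fin 2) (Fin 2) R := !![1,1;1,0]

lemma fibM_pow (R : Type*) [CommRing R] (n : ℕ) :
    (fibM R) ^ (n+1) = !![(Nat.fib (n+2) : R), (Nat.fib (n+1) : R); (Nat.fib (n+1) : R), (Nat.fib n : R)] := by
  induction n with
  | zero => simp [fibM]
  | succ k ih =>
    rw [pow_succ, ih]
    ext i j
    fin_cases i <;> fin_cases j <;>
      simp [fibM, Matrix.mul_apply, Fin.sum_univ_two, Nat.fib_add_two] <;> ring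

lemma one_add_pow_sq_zero {R : Type*} [Ring R] {a : R} (h : a * a = 0) (n : ℕ) :
    (1 + a) ^ n = 1 + n • a := by
  induction n with
  | zero => simp
  | succ k ih =>
    rw [pow_succ, ih, add_smul, one_smul]
    have h2 : (k • a) * a = k • (a * a) := smul_mul_assoc k a a
    rw [mul_add, add_mul, add_mul, mul_one, one_mul, h2, h, smul_zero, add_zero, mul_one]
    abel

lemma per_of_cast {K B : ℕ} (hB : 1 ≤ B)
    (h0 : (Nat.fib B : ZMod K) = 0) (h1 : (Nat.fib (B+1) : ZMod K) = 1) : Per K B := by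
  constructor
  · have := (ZMod.natCast_eq_natCast_iff (Nat.fib B) 0 K).1 (by simpa using h0)
    simpa using this
  · have := (ZMod.natCast_eq_natCast_iff (Nat.fib (B+1)) 1 K).1 (by simpa using h1)
    simpa using this

lemma per_lift {p e B : ℕ} (hp : 2 ≤ p) (he : 1 ≤ e) (hB : 1 ≤ B) (h : Per (p^e) B) :
    Per (p^(e+1)) (B * p) := by
  obtain ⟨b, rfl⟩ := Nat.exists_eq_add_of_le' hB   -- B = b + 1
  set B := b + 1 with hBdef
  have h0 : p ^ e ∣ Nat.fib B := Nat.modEq_zero_iff_dvd.1 h.1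
  have hf1 : 1 ≤ Nat.fib (B+1) := Nat.fib_pos.2 (Nat.succ_pos B)
  have h1 : p ^ e ∣ Nat.fib (B+1) - 1 := (Nat.modEq_iff_dvd' hf1).1 h.2.symm
  -- b ≠ 0
  have hb0 : b ≠ 0 := by
    rintro rfl
    have h01 : p ^ e ∣ 1 := by simpa [hBdef] using h0
    have hle : p ^ e ≤ 1 := Nat.le_of_dvd one_pos h01
    have hpe : 1 < p ^ e := Nat.one_lt_pow (by omega) (by omega)
    omega
  have hbpos : 1 ≤ b := Nat.one_le_iff_ne_zero.2 hb0
  have hfb' : Nat.fib b + Nat.fib B = Nat.fib (B+1) := (Nat.fib_add_two (n := b)).symm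
  have hfbpos : 1 ≤ Nat.fib b := Nat.fib_pos.2 hbpos
  have h3 : p ^ e ∣ Nat.fib b - 1 := by
    have hfb : Nat.fib b ≡ 1 [MOD p^e] := by
      have hA : Nat.fib b + Nat.fib B ≡ 1 [MOD p^e] := hfb' ▸ h.2
      have hB2 : Nat.fib b + Nat.fib B ≡ Nat.fib b + 0 [MOD p^e] := (h.1.add_left _)
      simpa using hB2.symm.trans hA
    exact (Nat.modEq_iff_dvd' hfbpos).1 hfb.symm
  obtain ⟨k1, hk1⟩ := h0
  obtain ⟨k2, hk2⟩ := h1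
  obtain ⟨k3, hk3⟩ := h3
  have hk2' : Nat.fib (B+1) = 1 + p^e * k2 := by omega
  have hk3' : Nat.fib b = 1 + p^e * k3 := by omega
  -- matrix part
  set R := ZMod (p^(e+1))
  have hMB : (fibM R) ^ B = 1 + ((p^e : ℕ) : R) • !![(k2 : R), (k1 : R); (k1 : R), (k3 : R)] := by
    rw [hBdef, fibM_pow]
    have e1 : (Nat.fib (b+2) : R) = 1 + ((p^e : ℕ):R) * k2 := by
      rw [show b + 2 = B + 1 by omega, hk2']; push_cast [R]; ring
    have e2 : (Nat.fib (b+1) : R) = ((p^e : ℕ):R) * k1 := by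
      rw [show b + 1 = B by omega, hk1]; push_cast [R]; ring
    have e3 : (Nat.fib b : R) = 1 + ((p^e : ℕ):R) * k3 := by
      rw [hk3']; push_cast [R]; ring
    ext i j
    fin_cases i <;> fin_cases j <;>
      simp [e1, e2, e3, Matrix.one_apply, Matrix.smul_apply] <;> ring
  set C : Matrix (Fin 2) (Fin 2) R := !![(k2 : R), (k1 : R); (k1 : R), (k3 : R)] with hC
  set a : Matrix (Fin 2) (Fin 2) R := ((p^e : ℕ) : R) • C with ha
  have hsq : a * a = 0 := by
    rw [ha, smul_mul_smul_comm]
    have : ((p^e : ℕ) : R) * ((p^e : ℕ) : R) = ((p^(2*e) : ℕ) : R) := by push_cast; ring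
    rw [this]
    have hz : ((p^(2*e) : ℕ) : R) = 0 := by
      rw [ZMod.natCast_eq_zero_iff]
      exact pow_dvd_pow p (by omega)
    rw [hz, zero_smul]
  have hpow : (fibM R) ^ (B * p) = 1 := by
    rw [pow_mul, hMB, one_add_pow_sq_zero hsq]
    have hpa : p • a = 0 := by
      rw [ha, ← smul_assoc]
      have : p • ((p^e : ℕ) : R) = ((p^(e+1) : ℕ) : R) := by
        rw [nsmul_eq_mul]; push_cast; ring
      rw [this, ZMod.natCast_self, zero_smul]
    rw [hpa, add_zero]
  -- extract entries
  have hBp : 1 ≤ B * p := Nat.le_mul_of_pos_right _ (by omega) |>.trans' (by omega)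
  obtain ⟨c, hc⟩ := Nat.exists_eq_add_of_le' hBp   -- B * p = c + 1
  rw [hc, fibM_pow] at hpow
  have h00 : (Nat.fib (c+2) : R) = 1 := by
    have := congrFun (congrFun hpow 0) 0
    simpa [Matrix.one_apply] using this
  have h01' : (Nat.fib (c+1) : R) = 0 := by
    have := congrFun (congrFun hpow 0) 1
    simpa [Matrix.one_apply] using this
  refine per_of_cast (K := p^(e+1)) (B := B * p) hBp ?_ ?_
  · rw [hc]; exact h01'
  · rw [hc, show c + 1 + 1 = c + 2 by omega]; exact h00

-- Binet-type identity in any comm ring with r^2 = r+1, s = 1-r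
lemma fib_binet {R : Type*} [CommRing R] {r : R} (hr : r^2 = r + 1) (n : ℕ) :
    (Nat.fib n : R) * (r - (1 - r)) = r^n - (1-r)^n := by
  set s : R := 1 - r with hs
  have hs2 : s^2 = s + 1 := by
    rw [hs]; linear_combination hr
  induction n using Nat.twoStepInduction with
  | zero => simp
  | one => simp
  | more n ih1 ih2 =>
    have : (Nat.fib (n+2) : R) = (Nat.fib n : R) + (Nat.fib (n+1) : R) := by
      rw [Nat.fib_add_two]; push_cast; ring
    rw [this, add_mul, ih1, ih2]
    have hrn : r^(n+2) = r^n * r + r^n := by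
      calc r^(n+2) = r^n * r^2 := by ring
      _ = r^n * (r+1) := by rw [hr]
      _ = r^n * r + r^n := by ring
    have hsn : s^(n+2) = s^n * s + s^n := by
      calc s^(n+2) = s^n * s^2 := by ring
      _ = s^n * (s+1) := by rw [hs2]
      _ = s^n * s + s^n := by ring
    rw [hrn, hsn]
    have hr1 : r^(n+1) = r^n * r := by ring
    have hs1 : s^(n+1) = s^n * s := by ring
    rw [hr1, hs1]
    ring

lemma per_split {p : ℕ} (hp : p.Prime) (hp2 : p ≠ 2) (hp5 : p ≠ 5)
    {r : ZMod p} (hr : r^2 = r + 1) : Per p (p - 1) := by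
  haveI : Fact p.Prime := ⟨hp⟩
  set s : ZMod p := 1 - r with hs
  have hrne : r ≠ 0 := by
    intro h; rw [h] at hr
    have h01 : (0 : ZMod p) = 1 := by linear_combination hr
    exact zero_ne_one h01
  have hsne : s ≠ 0 := by
    intro h
    have hr1 : r = 1 := by rw [hs] at h; linear_combination -h
    rw [hr1] at hr
    have h01 : (0 : ZMod p) = 1 := by linear_combination hr
    exact zero_ne_one h01
  have hD : (r - s) * (r - s) = 5 := by
    rw [hs]; ring_nf; linear_combination (4:ZMod p) * hr
  have h5 : (5 : ZMod p) ≠ 0 := by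
    intro h
    have hdvd : (p : ℕ) ∣ 5 := by
      have := (ZMod.natCast_eq_zero_iff 5 p).1 (by exact_mod_cast h)
      exact this
    exact hp5 ((Nat.prime_dvd_prime_iff_eq hp (by norm_num)).1 hdvd)
  have hDne : r - s ≠ 0 := by
    intro h; rw [h] at hD; simp at hD; exact h5 hD.symm
  have hrp : r ^ (p-1) = 1 := ZMod.pow_card_sub_one_eq_one hrne
  have hsp : s ^ (p-1) = 1 := ZMod.pow_card_sub_one_eq_one hsne
  have hp1 : 1 ≤ p - 1 := by have := hp.two_le; omega
  refine per_of_cast hp1 ?_ ?_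
  · have := fib_binet hr (p-1)
    rw [← hs] at this
    rw [hrp, hsp] at this
    simp at this
    rcases this with h | h
    · exact h
    · exact absurd h hDne
  · have hBp : p - 1 + 1 = p := by have := hp.two_le; omega
    rw [hBp]
    have := fib_binet hr p
    rw [← hs] at this
    have hrpp : r ^ p = r := ZMod.pow_card r
    have hspp : s ^ p = s := ZMod.pow_card s
    rw [hrpp, hspp] at this
    exact mul_right_cancel₀ hDne (by rw [this, one_mul])

lemma phi_pow_fib {R : Type*} [CommRing R] {u : R} (hu : u^2 = u + 1) (n : ℕ) :
    u^(n+1) = (Nat.fib (n+1) : R) * u + (Nat.fib n : R) := by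
  induction n with
  | zero => simp
  | succ k ih =>
    have h1 : u^(k+2) = u^(k+1) * u := by ring
    rw [h1, ih]
    have hfib2 : (Nat.fib (k+2) : R) = (Nat.fib k : R) + (Nat.fib (k+1) : R) := by
      rw [Nat.fib_add_two]; push_cast; ring
    rw [hfib2]
    linear_combination (Nat.fib (k+1) : R) * hu

lemma per_inert {p : ℕ} (hp : p.Prime) (hnr : ∀ r : ZMod p, r^2 ≠ r + 1) :
    Per p (2*(p+1)) := by
  haveI : Fact p.Prime := ⟨hp⟩
  set f : Polynomial (ZMod p) := X^2 - X - 1 with hf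
  have hdeg : f.natDegree = 2 := by rw [hf]; compute_degree!
  have hroots : f.roots = 0 := by
    by_contra h
    obtain ⟨r, hr⟩ := Multiset.exists_mem_of_ne_zero h
    have hne : f ≠ 0 := fun h0 => by rw [h0] at hdeg; simp at hdeg
    have hmem := (Polynomial.mem_roots hne).1 hr
    have heval : r^2 - r - 1 = 0 := by simpa [hf, Polynomial.IsRoot] using hmem
    exact hnr r (by linear_combination heval)
  have hirr : Irreducible f :=
    (Polynomial.irreducible_iff_roots_eq_zero_of_degree_le_three (by omega) (by omega)).2 hroots
  haveI : Fact (Irreducible f) := ⟨hirr⟩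
  letI : Field (AdjoinRoot f) := AdjoinRoot.instField
  have hinj : Function.Injective (algebraMap (ZMod p) (AdjoinRoot f)) :=
    (algebraMap (ZMod p) (AdjoinRoot f)).injective
  haveI : CharP (AdjoinRoot f) p := charP_of_injective_algebraMap hinj p
  set u : AdjoinRoot f := AdjoinRoot.root f with hu_def
  have hu : u^2 = u + 1 := by
    have h := AdjoinRoot.eval₂_root f
    rw [hf] at h
    simp only [Polynomial.eval₂_sub, Polynomial.eval₂_pow, Polynomial.eval₂_X,
      Polynomial.eval₂_one] at h
    simp only [hu_def, hf]
    linear_combination h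
  have hnotbase : ∀ c : ZMod p, u ≠ algebraMap (ZMod p) (AdjoinRoot f) c := by
    intro c hc
    apply hnr c
    apply hinj
    rw [map_pow, map_add, map_one, ← hc]
    exact hu
  have hfrobne : u^p ≠ u := by
    intro hfix
    set g : Polynomial (AdjoinRoot f) := X^p - X with hg
    have hdegg : g.natDegree = p := by
      rw [hg, Polynomial.natDegree_sub_eq_left_of_natDegree_lt] <;>
        simp [Polynomial.natDegree_X_pow, Polynomial.natDegree_X, hp.one_lt]
    have hgne : g ≠ 0 := fun h0 => by
      rw [h0] at hdegg; simp at hdegg; exact hp.ne_zero hdegg.symm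
    set s : Finset (AdjoinRoot f) :=
      insert u (Finset.univ.image (algebraMap (ZMod p) (AdjoinRoot f))) with hs
    have hsub : s.val ⊆ g.roots := by
      intro x hx
      rw [Finset.mem_val, hs, Finset.mem_insert] at hx
      have hroot : g.eval x = 0 := by
        rcases hx with rfl | hx
        · simp [hg, hfix]
        · obtain ⟨c, _, rfl⟩ := Finset.mem_image.1 hx
          simp only [hg, Polynomial.eval_sub, Polynomial.eval_pow, Polynomial.eval_X]
          rw [← map_pow, ZMod.pow_card, sub_self]
      exact (Polynomial.mem_roots hgne).2 hroot
    have hcard : s.card = p + 1 := by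
      rw [hs, Finset.card_insert_of_notMem, Finset.card_image_of_injective _ hinj,
        Finset.card_univ, ZMod.card]
      intro hmem
      obtain ⟨c, _, hc⟩ := Finset.mem_image.1 hmem
      exact hnotbase c hc.symm
    have := Polynomial.card_le_degree_of_subset_roots hsub
    rw [hcard, hdegg] at this
    omega
  have hmul : (u^p - u) * (u^p - (1 - u)) = 0 := by
    have h1 : (u^p)^2 = u^p + 1 := by
      calc (u^p)^2 = (u^2)^p := by ring
      _ = (u + 1)^p := by rw [hu]
      _ = u^p + 1^p := add_pow_char u 1 p
      _ = u^p + 1 := by rw [one_pow]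
    linear_combination h1 - hu
  have hfrob : u^p = 1 - u := by
    rcases mul_eq_zero.1 hmul with h | h
    · exact absurd (sub_eq_zero.1 h) hfrobne
    · exact sub_eq_zero.1 h
  have hpow1 : u^(p+1) = -1 := by
    rw [pow_succ, hfrob]
    linear_combination -hu
  have hone : u^(2*(p+1)) = 1 := by
    rw [show 2*(p+1) = (p+1)*2 by ring, pow_mul, hpow1]
    ring
  -- extract fib congruences
  set B := 2*(p+1) with hB
  have hstep : u^(B+1) = u := by
    rw [pow_succ, hone, one_mul]
  have hfib := phi_pow_fib hu B
  rw [hstep] at hfib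
  -- (fib(B+1) : R) * u + fib B = u
  have hcast : algebraMap (ZMod p) (AdjoinRoot f) ((Nat.fib (B+1) : ZMod p)) * u
      + algebraMap (ZMod p) (AdjoinRoot f) ((Nat.fib B : ZMod p)) = u := by
    rw [map_natCast, map_natCast]; exact hfib.symm
  have hA : (Nat.fib (B+1) : ZMod p) = 1 ∧ (Nat.fib B : ZMod p) = 0 := by
    by_cases hA1 : (Nat.fib (B+1) : ZMod p) = 1
    · refine ⟨hA1, ?_⟩
      rw [hA1, map_one, one_mul] at hcast
      have h0 : algebraMap (ZMod p) (AdjoinRoot f) ((Nat.fib B : ZMod p)) = 0 := by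
        linear_combination hcast
      apply hinj
      simpa using h0
    · exfalso
      have hne : ((Nat.fib (B+1) : ZMod p) - 1) ≠ 0 := sub_ne_zero.2 hA1
      apply hnotbase (((Nat.fib (B+1) : ZMod p) - 1)⁻¹ * (-(Nat.fib B : ZMod p)))
      have h2 : algebraMap (ZMod p) (AdjoinRoot f) ((Nat.fib (B+1) : ZMod p) - 1) * u
          = algebraMap (ZMod p) (AdjoinRoot f) (-(Nat.fib B : ZMod p)) := by
        rw [map_sub, map_one, map_neg]
        linear_combination hcast
      rw [map_mul, ← h2, ← mul_assoc, ← map_mul, inv_mul_cancel₀ hne, map_one, one_mul]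
  refine per_of_cast (by omega) hA.2 ?_
  exact hA.1

lemma per_two : Per 2 3 := by constructor <;> decide
lemma per_five : Per 5 20 := by constructor <;> decide

lemma per_pow_iter {p B : ℕ} (hp : 2 ≤ p) (hB : 1 ≤ B) (h : Per p B) (t : ℕ) :
    Per (p^(t+1)) (B * p^t) := by
  induction t with
  | zero => simpa using h
  | succ s ih =>
    have h1 : 1 ≤ B * p ^ s := Nat.mul_pos hB (Nat.pow_pos (by omega))
    have h2 := per_lift hp (by omega : 1 ≤ s + 1) h1 ih
    rw [show B * p ^ s * p = B * p ^ (s+1) by ring] at h2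
    exact h2

lemma le_of_two_pow_dvd {k v w : ℕ} (hw : Odd w) (h : 2^k ∣ 2^v * w) : k ≤ v := by
  have hcop : Nat.Coprime (2^k) w := Nat.Coprime.pow_left _ (Nat.coprime_two_left.2 hw)
  have h2 := (Nat.Coprime.dvd_of_dvd_mul_right hcop h)
  exact (Nat.pow_dvd_pow_iff_le_right one_lt_two).1 h2

def PerInv (m : ℕ) : Prop := ∃ v w, Odd w ∧ Per m (2^v * w) ∧ 2^(max v 2) * w ≤ 4 * m

lemma perInv_one : PerInv 1 := ⟨0, 1, odd_one, per_one _, by norm_num⟩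

lemma perInv_primepow {p e : ℕ} (hp : p.Prime) (hp2 : p ≠ 2) (hp5 : p ≠ 5) (he : 1 ≤ e) :
    PerInv (p^e) := by
  have hp3 : 3 ≤ p := by
    have := hp.two_le; omega
  obtain ⟨e', rfl⟩ := Nat.exists_eq_add_of_le' he  -- e = e' + 1
  by_cases hroot : ∃ r : ZMod p, r^2 = r + 1
  · obtain ⟨r, hr⟩ := hroot
    set B := (p - 1) * p ^ e' with hB
    have hper : Per (p^(e'+1)) B := per_pow_iter hp.two_le (by omega) (per_split hp hp2 hp5 hr) e'
    have hBne : B ≠ 0 := by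
      rw [hB]
      exact Nat.mul_ne_zero (by omega) (pow_ne_zero _ (by omega))
    obtain ⟨v, w, hw, hvw⟩ := Nat.exists_eq_two_pow_mul_odd hBne
    refine ⟨v, w, hw, by rwa [← hvw], ?_⟩
    have h1 : 2^(max v 2) * w ≤ 4 * (2^v * w) := by
      have hm : max v 2 ≤ v + 2 := by omega
      calc 2^(max v 2) * w ≤ 2^(v+2) * w :=
            Nat.mul_le_mul_right _ (Nat.pow_le_pow_right (by norm_num) hm)
      _ = 4 * (2^v * w) := by ring
    calc 2^(max v 2) * w ≤ 4 * (2^v * w) := h1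
    _ = 4 * B := by rw [hvw]
    _ ≤ 4 * p^(e'+1) := by
        have hBle : B ≤ p^(e'+1) := by
          calc B = p^e' * (p-1) := by rw [hB]; ring
          _ ≤ p^e' * p := Nat.mul_le_mul_left _ (by omega)
          _ = p^(e'+1) := (pow_succ p e').symm
        exact Nat.mul_le_mul (le_refl 4) hBle
  · push_neg at hroot
    set B := (2 * (p+1)) * p ^ e' with hB
    have hBpos : 0 < B := Nat.mul_pos (by omega) (Nat.pow_pos (by omega))
    have hper0 := per_pow_iter hp.two_le (by omega : 1 ≤ 2*(p+1)) (per_inert hp hroot) e'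
    have hper : Per (p^(e'+1)) B := by rw [hB]; exact hper0
    obtain ⟨v, w, hw, hvw⟩ := Nat.exists_eq_two_pow_mul_odd (by omega : B ≠ 0)
    have h4 : (4:ℕ) ∣ B := by
      have hodd : Odd p := hp.odd_of_ne_two hp2
      obtain ⟨c, hc⟩ := hodd
      have h24 : 2 * (p + 1) = 4 * (c + 1) := by omega
      rw [hB, h24]
      exact ⟨(c+1) * p^e', by ring⟩
    have hv2 : 2 ≤ v := le_of_two_pow_dvd hw (hvw ▸ h4)
    refine ⟨v, w, hw, by rwa [← hvw], ?_⟩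
    rw [max_eq_left hv2, ← hvw, hB]
    have h24 : 2 * (p + 1) ≤ 4 * p := by omega
    calc 2 * (p+1) * p^e' ≤ 4 * p * p^e' := Nat.mul_le_mul_right _ h24
    _ = 4 * p^(e'+1) := by rw [pow_succ]; ring

lemma perInv_mul {m₁ m₂ : ℕ} (hco : Nat.Coprime m₁ m₂) (h₁ : PerInv m₁) (h₂ : PerInv m₂) :
    PerInv (m₁ * m₂) := by
  obtain ⟨v₁, w₁, hw₁, hper₁, hb₁⟩ := h₁
  obtain ⟨v₂, w₂, hw₂, hper₂, hb₂⟩ := h₂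
  refine ⟨max v₁ v₂, w₁ * w₂, hw₁.mul hw₂, ?_, ?_⟩
  · have hd₁ : 2^v₁ * w₁ ∣ 2^(max v₁ v₂) * (w₁ * w₂) :=
      Nat.mul_dvd_mul (Nat.pow_dvd_pow 2 (le_max_left _ _)) (Dvd.intro _ rfl)
    have hd₂ : 2^v₂ * w₂ ∣ 2^(max v₁ v₂) * (w₁ * w₂) :=
      Nat.mul_dvd_mul (Nat.pow_dvd_pow 2 (le_max_right _ _)) (Dvd.intro_left _ rfl)
    exact per_coprime_mul hco (per_dvd hper₁ hd₁) (per_dvd hper₂ hd₂)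
  · have hkey : 2^(max (max v₁ v₂) 2) * 4 ≤ 2^(max v₁ 2) * 2^(max v₂ 2) := by
      have h1 : max (max v₁ v₂) 2 + 2 ≤ max v₁ 2 + max v₂ 2 := by omega
      calc 2^(max (max v₁ v₂) 2) * 4 = 2^(max (max v₁ v₂) 2 + 2) := by ring
      _ ≤ 2^(max v₁ 2 + max v₂ 2) := Nat.pow_le_pow_right (by norm_num) h1
      _ = 2^(max v₁ 2) * 2^(max v₂ 2) := by rw [pow_add]
    have hfin : (2^(max (max v₁ v₂) 2) * (w₁ * w₂)) * 4 ≤ (4 * m₁) * (4 * m₂) := by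
      calc (2^(max (max v₁ v₂) 2) * (w₁ * w₂)) * 4
          = (2^(max (max v₁ v₂) 2) * 4) * (w₁ * w₂) := by ring
      _ ≤ (2^(max v₁ 2) * 2^(max v₂ 2)) * (w₁ * w₂) := Nat.mul_le_mul_right _ hkey
      _ = (2^(max v₁ 2) * w₁) * (2^(max v₂ 2) * w₂) := by ring
      _ ≤ (4 * m₁) * (4 * m₂) := Nat.mul_le_mul hb₁ hb₂
    have h16 : (4 * m₁) * (4 * m₂) = (4 * (m₁ * m₂)) * 4 := by ring
    rw [h16] at hfin
    exact Nat.le_of_mul_le_mul_right hfin (by norm_num)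

lemma not_dvd_of_coprime10 {m q : ℕ} (hq : q ∣ 10) (hq1 : 2 ≤ q) (hco : Nat.Coprime m 10)
    (hdvd : q ∣ m) : False := by
  have hc2 : Nat.Coprime m q := hco.coprime_dvd_right hq
  have h1 : q ∣ Nat.gcd m q := Nat.dvd_gcd hdvd (dvd_refl q)
  rw [hc2] at h1
  exact absurd (Nat.le_of_dvd one_pos h1) (by omega)

lemma perInv_coprime10 (m : ℕ) (hm : 1 ≤ m) (hco : Nat.Coprime m 10) : PerInv m := by
  induction m using Nat.strong_induction_on with
  | _ m ih =>
    rcases eq_or_lt_of_le hm with h1 | h1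
    · exact h1 ▸ perInv_one
    · have hm1 : m ≠ 1 := by omega
      have hm0 : m ≠ 0 := by omega
      set p := m.minFac with hpdef
      have hp : p.Prime := Nat.minFac_prime hm1
      have hpdvd : p ∣ m := Nat.minFac_dvd m
      have hp2 : p ≠ 2 := by
        rintro h2
        exact not_dvd_of_coprime10 (by norm_num) (by norm_num) hco (h2 ▸ hpdvd)
      have hp5 : p ≠ 5 := by
        rintro h5
        exact not_dvd_of_coprime10 (by norm_num) (by norm_num) hco (h5 ▸ hpdvd)
      set e := m.factorization p with he
      have he1 : 1 ≤ e := hp.factorization_pos_of_dvd hm0 hpdvd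
      set m' := m / p ^ e with hm'
      have hsplit : p ^ e * m' = m := Nat.ordProj_mul_ordCompl_eq_self m p
      have hndvd : ¬ p ∣ m' := Nat.not_dvd_ordCompl hp hm0
      have hpe1 : 1 < p ^ e := Nat.one_lt_pow (by omega) hp.one_lt
      have hm'lt : m' < m := by
        have hm'pos : 0 < m' := Nat.ordCompl_pos p hm0
        have hlt : m' * 1 < m' * p ^ e := mul_lt_mul_of_pos_left hpe1 hm'pos
        have heq : m' * p ^ e = m := by rw [mul_comm]; exact hsplit
        omega
      have hm'pos : 1 ≤ m' := Nat.ordCompl_pos p hm0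
      have hm'co : Nat.Coprime m' 10 :=
        Nat.Coprime.coprime_dvd_left (Nat.div_dvd_of_dvd (Nat.ordProj_dvd m p)) hco
      have hcop : Nat.Coprime (p ^ e) m' :=
        Nat.Coprime.pow_left _ ((Nat.Prime.coprime_iff_not_dvd hp).2 hndvd)
      have h₁ : PerInv (p ^ e) := perInv_primepow hp hp2 hp5 he1
      have h₂ : PerInv m' := ih m' hm'lt hm'pos hm'co
      have := perInv_mul hcop h₁ h₂
      rwa [hsplit] at this

lemma decomp (K : ℕ) (hK : K ≠ 0) :
    ∃ a b m, K = 2^a * 5^b * m ∧ ¬ 2 ∣ m ∧ ¬ 5 ∣ m ∧ 0 < m := by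
  refine ⟨K.factorization 2, (K / 2 ^ K.factorization 2).factorization 5,
    (K / 2 ^ K.factorization 2) / 5 ^ (K / 2 ^ K.factorization 2).factorization 5, ?_, ?_, ?_, ?_⟩
  · rw [mul_assoc, Nat.ordProj_mul_ordCompl_eq_self, Nat.ordProj_mul_ordCompl_eq_self]
  · intro h
    apply Nat.not_dvd_ordCompl Nat.prime_two hK
    exact h.trans (Nat.div_dvd_of_dvd (Nat.ordProj_dvd _ 5))
  · exact Nat.not_dvd_ordCompl Nat.prime_five (Nat.pos_iff_ne_zero.1 (Nat.ordCompl_pos 2 hK))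
  · exact Nat.ordCompl_pos 5 (Nat.pos_iff_ne_zero.1 (Nat.ordCompl_pos 2 hK))

theorem pisano_le (K : ℕ) (hK : 1 ≤ K) :
    sInf {P : ℕ | 0 < P ∧ ∀ n : ℕ, Nat.fib (n + P) ≡ Nat.fib n [MOD K]} ≤ 6 * K := by
  obtain ⟨a, b, m, hKeq, h2m, h5m, hmpos⟩ := decomp K (by omega)
  have hmco : Nat.Coprime m 10 := by
    have h2 : Nat.Coprime m 2 := Nat.coprime_comm.1 ((Nat.Prime.coprime_iff_not_dvd Nat.prime_two).2 h2m)
    have h5 : Nat.Coprime m 5 := Nat.coprime_comm.1 ((Nat.Prime.coprime_iff_not_dvd Nat.prime_five).2 h5m)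
    have h10 : (10:ℕ) = 2 * 5 := by norm_num
    rw [h10]
    exact Nat.Coprime.mul_right h2 h5
  obtain ⟨v, w, hw, hperm, hbound⟩ := perInv_coprime10 m hmpos hmco
  have hwpos : 0 < w := hw.pos
  have hodd5bm : ¬ 2 ∣ 5 ^ b * m := by
    intro h
    rcases (Nat.Prime.dvd_mul Nat.prime_two).1 h with h | h
    · have := Nat.Prime.dvd_of_dvd_pow (p := 2) Nat.prime_two h
      norm_num at this
    · exact h2m h
  have hco2 : Nat.Coprime (2^a) (5^b * m) :=
    Nat.Coprime.pow_left _ ((Nat.Prime.coprime_iff_not_dvd Nat.prime_two).2 hodd5bm)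
  have hco5 : Nat.Coprime (5^b) m :=
    Nat.Coprime.pow_left _ ((Nat.Prime.coprime_iff_not_dvd Nat.prime_five).2 h5m)
  have hper5 : ∀ s, b = s + 1 → Per (5^b) (4 * 5^b) := by
    rintro s rfl
    have h := per_pow_iter (by norm_num) (by norm_num) per_five s
    have heq : 20 * 5 ^ s = 4 * 5 ^ (s+1) := by rw [pow_succ]; ring
    rwa [heq] at h
  have key : ∃ P, 0 < P ∧ P ≤ 6 * K ∧ Per K P := by
    rcases Nat.eq_zero_or_pos a with ha0 | ha1
    · rcases Nat.eq_zero_or_pos b with hb0 | hb1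
      · -- K = m
        have hKm : K = m := by rw [hKeq, ha0, hb0]; ring
        refine ⟨2^v * w, by positivity, ?_, by rwa [hKm]⟩
        have h1 : 2^v * w ≤ 2^(max v 2) * w :=
          Nat.mul_le_mul_right _ (Nat.pow_le_pow_right (by norm_num) (le_max_left _ _))
        have h2 : 4 * m ≤ 6 * m := by omega
        rw [hKm]
        omega
      · obtain ⟨s, hs⟩ := Nat.exists_eq_add_of_le' hb1
        have hKm : K = 5^b * m := by rw [hKeq, ha0]; ring
        refine ⟨2^(max v 2) * 5^b * w, by positivity, ?_, ?_⟩
        · have h1 : 2^(max v 2) * 5^b * w = 5^b * (2^(max v 2) * w) := by ring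
          rw [h1, hKm]
          calc 5^b * (2^(max v 2) * w) ≤ 5^b * (4 * m) := Nat.mul_le_mul_left _ hbound
          _ ≤ 6 * (5^b * m) := by ring_nf; omega
        · rw [hKm]
          refine per_coprime_mul hco5 (per_dvd (hper5 s hs) ?_) (per_dvd hperm ?_)
          · obtain ⟨c, hc⟩ : ∃ c, max v 2 = 2 + c := ⟨max v 2 - 2, by omega⟩
            refine ⟨2^c * w, ?_⟩
            rw [hc, pow_add]
            norm_num
            ring
          · obtain ⟨c, hc⟩ : ∃ c, max v 2 = v + c := ⟨max v 2 - v, by omega⟩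
            refine ⟨2^c * 5^b, ?_⟩
            rw [hc, pow_add]
            ring
    · obtain ⟨t, ht⟩ := Nat.exists_eq_add_of_le' ha1
      have hper2 : Per (2^a) (3 * 2^t) := by
        rw [ht]
        have h := per_pow_iter (by norm_num) (by norm_num) per_two t
        exact h
      refine ⟨2^t * 2^(max v 2) * 3 * 5^b * w, by positivity, ?_, ?_⟩
      · calc 2^t * 2^(max v 2) * 3 * 5^b * w = (2^t * 3 * 5^b) * (2^(max v 2) * w) := by ring
        _ ≤ (2^t * 3 * 5^b) * (4 * m) := Nat.mul_le_mul_left _ hbound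
        _ = 6 * (2^(t+1) * 5^b * m) := by rw [pow_succ]; ring
        _ = 6 * K := by rw [hKeq, ht]
      · rw [hKeq, mul_assoc]
        refine per_coprime_mul hco2 (per_dvd hper2 ?_) (per_coprime_mul hco5 ?_ ?_)
        · exact ⟨2^(max v 2) * 5^b * w, by ring⟩
        · rcases Nat.eq_zero_or_pos b with hb0 | hb1
          · rw [hb0]; simpa using per_one _
          · obtain ⟨s, hs⟩ := Nat.exists_eq_add_of_le' hb1
            refine per_dvd (hper5 s hs) ?_
            obtain ⟨c, hc⟩ : ∃ c, max v 2 = 2 + c := ⟨max v 2 - 2, by omega⟩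
            refine ⟨2^t * 2^c * 3 * w, ?_⟩
            rw [hc, pow_add]
            norm_num
            ring
        · obtain ⟨c, hc⟩ : ∃ c, max v 2 = v + c := ⟨max v 2 - v, by omega⟩
          refine per_dvd hperm ⟨2^t * 2^c * 3 * 5^b, ?_⟩
          rw [hc, pow_add]
          ring
  obtain ⟨P, hPpos, hPle, hPer⟩ := key
  exact le_trans (Nat.sInf_le ⟨hPpos, fun n => per_shift hPer n⟩) hPle
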